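/- Let μ be a Rayleigh probability measure supported on a family B of subsets of a finite set E, all of the same size r, with marginals q_e = P_{B∼μ}[e ∈ B]. Sample B ∼ μ and then include each element of B independently with probability 1/2; let S denote the resulting random subset. Then for every e ∈ E, P[e ∈ S] = q_e/2, and for every e ∈ E and every T ⊆ E∖{e} with P[S∖{e} = T] > 0, P[e ∈ S | S∖{e} = T] ≤ q_e. -/

import Mathlib

open Finset

/-- Probability of the event `P` under the tilt of the measure `μ` by the weight vector `w`:
`μ_w(A) ∝ μ(A) · ∏_{e∈A} w_e`. -/
noncomputable def tiltProb {E : Type*} [Fintype E] [DecidableEq E]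
    (μ : Finset E → ℝ) (w : E → ℝ) (P : Finset E → Prop) [DecidablePred P] : ℝ :=
  (∑ A ∈ univ.filter P, μ A * ∏ e ∈ A, w e) / (∑ A : Finset E, μ A * ∏ e ∈ A, w e)

/-- `μ` is Rayleigh: every positive tilt of `μ` satisfies the Rayleigh inequality
`P[T ⊆ B] · P[e ∈ B] ≥ P[T ∪ {e} ⊆ B]`. -/
def IsRayleigh {E : Type*} [Fintype E] [DecidableEq E] (μ : Finset E → ℝ) : Prop :=
  ∀ w : E → ℝ, (∀ e, 0 < w e) → ∀ e : E, ∀ T : Finset E, e ∉ T →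
    tiltProb μ w (fun A => insert e T ⊆ A) ≤
      tiltProb μ w (fun A => T ⊆ A) * tiltProb μ w (fun A => e ∈ A)

lemma card_subsets_containing {E : Type*} [Fintype E] [DecidableEq E] (A : Finset E) (e : E)
    (he : e ∈ A) :
    (univ.filter (fun T : Finset E => e ∈ T ∧ T ⊆ A)).card = 2 ^ (A.card - 1) := by
  have h1 : (univ.filter (fun T : Finset E => e ∈ T ∧ T ⊆ A)) =
      (A.erase e).powerset.image (insert e ·) := by
    ext T
    simp only [mem_filter, mem_univ, true_and, mem_image, mem_powerset]
    constructor
    · rintro ⟨heT, hTA⟩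
      exact ⟨T.erase e, fun x hx => mem_erase.mpr ⟨(mem_erase.mp hx).1, hTA (mem_erase.mp hx).2⟩,
        by rw [insert_erase heT]⟩
    · rintro ⟨t, ht, rfl⟩
      refine ⟨mem_insert_self _ _, insert_subset he (ht.trans (erase_subset _ _))⟩
  rw [h1, card_image_of_injOn, card_powerset, card_erase_of_mem he]
  intro s hs t ht hst
  simp only [mem_coe, mem_powerset] at hs ht
  have hse : e ∉ s := fun h => (mem_erase.mp (hs h)).1 rfl
  have hte : e ∉ t := fun h => (mem_erase.mp (ht h)).1 rfl
  simp only [] at hst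
  rw [← erase_insert hse, ← erase_insert hte]
  exact congrArg (·.erase e) hst

theorem stmt_13 {E : Type*} [Fintype E] [DecidableEq E]
    (B : Finset (Finset E)) (r : ℕ)
    -- all members of B have the same size r
    (hBr : ∀ A ∈ B, A.card = r)
    -- μ is a Rayleigh probability measure supported on B
    (μ : Finset E → ℝ)
    (h0 : ∀ A, 0 ≤ μ A)
    (hsupp : ∀ A, μ A ≠ 0 → A ∈ B)
    (hsum : (∑ A : Finset E, μ A) = 1)
    (hray : IsRayleigh μ)
    -- with marginals q
    (q : E → ℝ)
    (hq : ∀ e, q e = ∑ A ∈ univ.filter (fun A => e ∈ A), μ A)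
    -- ν is the law of the 1/2-thinning S of B ∼ μ
    (ν : Finset E → ℝ)
    (hν : ∀ T : Finset E, ν T = (∑ A ∈ univ.filter (fun A => T ⊆ A), μ A) / 2 ^ r) :
    -- P[e ∈ S] = q_e/2
    (∀ e, ∑ T ∈ univ.filter (fun T => e ∈ T), ν T = q e / 2) ∧
    -- P[e ∈ S | S∖{e} = T] ≤ q_e
    (∀ e : E, ∀ T : Finset E, e ∉ T → 0 < ν T + ν (insert e T) →
      ν (insert e T) / (ν T + ν (insert e T)) ≤ q e) := by
  constructor
  · intro e
    have step1 : ∑ T ∈ univ.filter (fun T => e ∈ T), ν T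
        = ∑ A : Finset E, ∑ T ∈ univ.filter (fun T : Finset E => e ∈ T ∧ T ⊆ A),
            μ A / 2 ^ r := by
      simp_rw [hν, sum_div, sum_filter]
      have key : ∀ T : Finset E,
          (if e ∈ T then ∑ A : Finset E, if T ⊆ A then μ A / 2 ^ r else 0 else 0)
            = ∑ A : Finset E, if e ∈ T ∧ T ⊆ A then μ A / 2 ^ r else 0 := by
        intro T
        split
        · refine Finset.sum_congr rfl fun A _ => ?_
          simp [*]
        · symm
          refine Finset.sum_eq_zero fun A _ => ?_
          simp [*]
      simp_rw [key]
      rw [Finset.sum_comm]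
    rw [step1, hq, Finset.sum_div, sum_filter]
    refine Finset.sum_congr rfl fun A _ => ?_
    rw [Finset.sum_const, nsmul_eq_mul]
    by_cases hμ : μ A = 0
    · simp [hμ]
    · have hcard : A.card = r := hBr A (hsupp A hμ)
      by_cases he : e ∈ A
      · have hr : 1 ≤ r := hcard ▸ card_pos.mpr ⟨e, he⟩
        rw [card_subsets_containing A e he, hcard, if_pos he, Nat.cast_pow, Nat.cast_ofNat]
        have h2 : (2:ℝ)^r = 2^(r-1) * 2 := by
          rw [← pow_succ]; congr 1; omega
        have hne : ((2:ℝ))^(r-1) ≠ 0 := by positivity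
        rw [h2]
        field_simp
      · have hemp : (univ.filter (fun T : Finset E => e ∈ T ∧ T ⊆ A)) = ∅ := by
          ext T; simp only [mem_filter, mem_univ, true_and, notMem_empty, iff_false]
          rintro ⟨h1, h2⟩; exact he (h2 h1)
        simp [hemp, he]
  · intro e T heT hpos
    have htilt : ∀ (P : Finset E → Prop) (_ : DecidablePred P),
        tiltProb μ (fun _ => 1) P = ∑ A ∈ univ.filter P, μ A := by
      intro P _
      simp [tiltProb, hsum]
    have hr := hray (fun _ => 1) (fun _ => one_pos) e T heT
    rw [htilt _ _, htilt _ _, htilt _ _] at hr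
    rw [← hq e] at hr
    rw [hν, hν, ← add_div] at hpos ⊢
    set a := ∑ A ∈ univ.filter (fun A => insert e T ⊆ A), μ A with ha
    set b := ∑ A ∈ univ.filter (fun A => T ⊆ A), μ A with hb
    have ha0 : 0 ≤ a := Finset.sum_nonneg fun A _ => h0 A
    have hq0 : 0 ≤ q e := (hq e) ▸ Finset.sum_nonneg fun A _ => h0 A
    have h2r : (0:ℝ) < 2 ^ r := by positivity
    have hba : 0 < b + a := by
      by_contra hc
      push_neg at hc
      have : (b + a) / 2 ^ r ≤ 0 := div_nonpos_of_nonpos_of_nonneg hc h2r.le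
      linarith
    have hrw : a / (2:ℝ)^r / ((b+a)/2^r) = a/(b+a) := by
      rw [div_div_div_cancel_right₀]
      exact h2r.ne'
    rw [hrw, div_le_iff₀ hba]
    nlinarith
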